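/- For every real number b > 1, with q = exp(2π²/ln(b)), the identity ∑_{n=1}^∞ bⁿ/(1 + bⁿ)² − 1/(2 ln(b)) = −1/8 + (4π²/ln²(b)) · ∑_{j=0}^∞ q^{1+2j}/(q^{1+2j} − 1)² holds. -/

import Mathlib

set_option maxHeartbeats 2000000

open Real Complex

lemma gamma_refl (c : ℝ) (hc : c ≠ 0) :
    Complex.Gamma (1 - c * I) * Complex.Gamma (1 + c * I)
      = ((π * c / Real.sinh (π * c) : ℝ) : ℂ) := by
  have h0 : (c : ℂ) * I ≠ 0 := by
    simp [Complex.ext_iff, hc]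
  have h1 : Complex.Gamma (1 + c * I) = (c * I) * Complex.Gamma (c * I) := by
    rw [add_comm, Complex.Gamma_add_one _ h0]
  have h2 : Complex.Gamma (c * I) * Complex.Gamma (1 - c * I) = π / Complex.sin (π * (c * I)) := 
    Complex.Gamma_mul_Gamma_one_sub _
  have hsin : Complex.sin (π * (c * I)) = (Real.sinh (π * c) : ℂ) * I := by
    rw [show (π : ℂ) * (c * I) = ((π * c : ℝ) : ℂ) * I by push_cast; ring, Complex.sin_mul_I,
      Complex.ofReal_sinh]
  have hsh : Real.sinh (π * c) ≠ 0 := by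
    simp only [ne_eq, Real.sinh_eq_zero]
    exact mul_ne_zero Real.pi_ne_zero hc
  rw [mul_comm, h1, mul_assoc, h2, hsin]
  push_cast
  field_simp

open Real Complex MeasureTheory Filter Asymptotics

noncomputable def fC (L : ℝ) : ℝ → ℂ :=
  fun x => ((Real.exp (L * x) / (1 + Real.exp (L * x)) ^ 2 : ℝ) : ℂ)

lemma fC_cont (L : ℝ) : Continuous (fC L) := by
  apply Complex.continuous_ofReal.comp
  apply Continuous.div
  · exact Real.continuous_exp.comp (continuous_const.mul continuous_id)
  · fun_prop
  · intro x
    have := Real.exp_pos (L * x)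
    positivity

lemma fC_bound (L : ℝ) (hL : 0 < L) (x : ℝ) : ‖fC L x‖ ≤ Real.exp (-(L * |x|)) := by
  have hE : (0:ℝ) < Real.exp (L * x) := Real.exp_pos _
  have hnorm : ‖fC L x‖ = Real.exp (L * x) / (1 + Real.exp (L * x)) ^ 2 := by
    rw [fC, Complex.norm_real, Real.norm_eq_abs, abs_of_pos (by positivity)]
  rw [hnorm]
  rcases le_or_gt 0 x with hx | hx
  · rw [_root_.abs_of_nonneg hx, div_le_iff₀ (by positivity)]
    have key : Real.exp (-(L * x)) * Real.exp (L * x) = 1 := by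
      rw [← Real.exp_add]; simp
    nlinarith [Real.exp_pos (-(L * x)), hE, sq_nonneg (Real.exp (L * x))]
  · rw [abs_of_neg hx, show -(L * -x) = L * x by ring, div_le_iff₀ (by positivity)]
    nlinarith [hE, mul_pos hE hE, mul_pos (mul_pos hE hE) hE]

lemma exp_decay_isBigO (L : ℝ) (hL : 0 < L) :
    (fun x : ℝ => Real.exp (-(L * |x|))) =O[cocompact ℝ] fun x : ℝ => |x| ^ (-2:ℝ) := by
  rw [cocompact_eq_atBot_atTop, isBigO_sup]
  have htop : (fun x : ℝ => Real.exp (-(L * |x|))) =O[atTop] fun x : ℝ => |x| ^ (-2:ℝ) := by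
    have ht := tendsto_rpow_mul_exp_neg_mul_atTop_nhds_zero 2 L hL
    rw [isBigO_iff]
    refine ⟨1, ?_⟩
    filter_upwards [eventually_ge_atTop (1:ℝ), ht.eventually_lt_const one_pos] with x hx1 hx2
    have hx0 : (0:ℝ) < x := lt_of_lt_of_le one_pos hx1
    have hpos : (0:ℝ) < x ^ (2:ℝ) := Real.rpow_pos_of_pos hx0 _
    rw [Real.norm_eq_abs, Real.norm_eq_abs, _root_.abs_of_nonneg (Real.exp_pos _).le,
      _root_.abs_of_nonneg (Real.rpow_nonneg (abs_nonneg x) _), _root_.abs_of_pos hx0,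
      Real.rpow_neg hx0.le, one_mul, inv_eq_one_div, le_div_iff₀ hpos]
    have : -(L * x) = -L * x := by ring
    rw [this]
    nlinarith [hx2]
  refine ⟨?_, htop⟩
  have hcomp := htop.comp_tendsto tendsto_neg_atBot_atTop
  refine hcomp.congr (fun x => ?_) (fun x => ?_)
  · simp [Function.comp, abs_neg]
  · simp [Function.comp, abs_neg]

lemma fC_isBigO (L : ℝ) (hL : 0 < L) :
    fC L =O[cocompact ℝ] fun x : ℝ => |x| ^ (-2:ℝ) := by
  refine (IsBigO.trans ?_ (exp_decay_isBigO L hL))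
  apply isBigO_of_le
  intro x
  exact (fC_bound L hL x).trans (le_abs_self _)

open Real Complex MeasureTheory

lemma fourier_fC (L : ℝ) (hL : 0 < L) (ξ : ℝ) :
    FourierTransform.fourier (fC L) ξ
      = Complex.Gamma (1 - (2 * π * ξ / L : ℝ) * I) * Complex.Gamma (1 + (2 * π * ξ / L : ℝ) * I)
          / L := by
  set c : ℝ := 2 * π * ξ / L with hc
  set s : ℂ := (c : ℝ) * I with hs
  have hres1 : 0 < (1 - s).re := by simp [hs]
  have hres2 : 0 < (1 + s).re := by simp [hs]
  have hsum : (1 - s) + (1 + s) = 2 := by ring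
  have hG2 : Complex.Gamma 2 = 1 := by
    rw [show (2 : ℂ) = 1 + 1 by norm_num, Complex.Gamma_add_one _ one_ne_zero,
      Complex.Gamma_one, mul_one]
  have hbeta : Complex.Gamma (1 - s) * Complex.Gamma (1 + s)
      = Complex.betaIntegral (1 - s) (1 + s) := by
    rw [Complex.Gamma_mul_Gamma_eq_betaIntegral hres1 hres2, hsum, hG2, one_mul]
  -- the substitution
  set E : ℝ → ℝ := fun x => Real.exp (L * x) with hE
  have hEpos : ∀ x, 0 < E x := fun x => Real.exp_pos _
  have h1E : ∀ x, 0 < 1 + E x := fun x => by positivity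
  set φ : ℝ → ℝ := fun x => E x / (1 + E x) with hφ
  set f : ℝ → ℝ := fun x => E x / (1 + E x) ^ 2 with hf
  have hφ01 : ∀ x, φ x ∈ Set.Ioo (0 : ℝ) 1 := by
    intro x
    constructor
    · exact div_pos (hEpos x) (h1E x)
    · rw [div_lt_one (h1E x)]; linarith
  have hEd : ∀ x, HasDerivAt E (L * E x) x := by
    intro x
    have := (Real.hasDerivAt_exp (L * x)).comp x ((hasDerivAt_id x).const_mul L)
    have h2 : HasDerivAt (fun x => Real.exp (L * x)) (L * Real.exp (L * x)) x := by
      refine this.congr_deriv ?_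
      ring
    exact h2
  have hφd : ∀ x, HasDerivAt φ (L * f x) x := by
    intro x
    have h := (hEd x).div ((hEd x).const_add 1) (ne_of_gt (h1E x))
    refine h.congr_deriv ?_
    rw [hf]
    field_simp
    ring
  have hinj : Set.InjOn φ Set.univ := by
    have : StrictMono φ := by
      intro x y hxy
      have hExy : E x < E y := Real.exp_lt_exp.2 (by nlinarith)
      rw [hφ]
      rw [div_lt_div_iff₀ (h1E x) (h1E y)]
      nlinarith
    exact this.injective.injOn
  have himg : φ '' Set.univ = Set.Ioo 0 1 := by
    apply Set.eq_of_subset_of_subset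
    · rintro t ⟨x, -, rfl⟩; exact hφ01 x
    · rintro t ⟨ht0, ht1⟩
      refine ⟨Real.log (t / (1 - t)) / L, Set.mem_univ _, ?_⟩
      have h1t : 0 < 1 - t := by linarith
      have hE' : E (Real.log (t / (1 - t)) / L) = t / (1 - t) := by
        show Real.exp (L * (Real.log (t / (1 - t)) / L)) = t / (1 - t)
        rw [mul_div_cancel₀ _ (ne_of_gt hL)]
        exact Real.exp_log (div_pos ht0 h1t)
      show E _ / (1 + E _) = t
      rw [hE']
      field_simp
      ring
  set g : ℝ → ℂ := fun t => (t : ℂ) ^ (-s) * (1 - (t : ℂ)) ^ s with hg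
  have hsub : Complex.betaIntegral (1 - s) (1 + s) = ∫ t in Set.Ioo (0:ℝ) 1, g t := by
    rw [Complex.betaIntegral]
    rw [intervalIntegral.integral_of_le zero_le_one, ← MeasureTheory.integral_Ioc_eq_integral_Ioo]
    congr 1
    ext t
    rw [hg]
    ring_nf
  have hchg : ∫ t in Set.Ioo (0:ℝ) 1, g t = ∫ x, |L * f x| • g (φ x) := by
    rw [← himg]
    rw [MeasureTheory.integral_image_eq_integral_abs_deriv_smul MeasurableSet.univ
      (fun x _ => (hφd x).hasDerivWithinAt) hinj g]
    simp
  have hpoint : ∀ x : ℝ, |L * f x| • g (φ x)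
      = (L : ℂ) * (Complex.exp ((-2 * π * x * ξ : ℝ) * I) * fC L x) := by
    intro x
    have hfpos : 0 < f x := div_pos (hEpos x) (by positivity)
    have habs : |L * f x| = L * f x := abs_of_pos (mul_pos hL hfpos)
    have hφx := hφ01 x
    have hφpos : (0:ℝ) < φ x := hφx.1
    have h1φpos : (0:ℝ) < 1 - φ x := by linarith [hφx.2]
    have hgval : g (φ x) = Complex.exp ((-2 * π * x * ξ : ℝ) * I) := by
      show (↑(φ x) : ℂ) ^ (-s) * (1 - (↑(φ x) : ℂ)) ^ s = _
      have e1 : (↑(φ x) : ℂ) ^ (-s) = Complex.exp ((Real.log (φ x) : ℂ) * (-s)) := by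
        rw [Complex.cpow_def_of_ne_zero (by exact_mod_cast ne_of_gt hφpos),
          Complex.ofReal_log hφpos.le]
      have e2 : (1 - (↑(φ x) : ℂ)) ^ s = Complex.exp ((Real.log (1 - φ x) : ℂ) * s) := by
        rw [show (1 - (↑(φ x) : ℂ)) = ((1 - φ x : ℝ) : ℂ) by push_cast; ring]
        rw [Complex.cpow_def_of_ne_zero (by exact_mod_cast ne_of_gt h1φpos),
          Complex.ofReal_log h1φpos.le]
      rw [e1, e2, ← Complex.exp_add]
      congr 1
      have hratio : φ x / (1 - φ x) = E x := by
        rw [hφ]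
        have : (1 : ℝ) - E x / (1 + E x) = 1 / (1 + E x) := by
          rw [eq_div_iff (h1E x).ne', sub_mul, div_mul_cancel₀ _ (h1E x).ne']; ring
        rw [this]
        field_simp
        exact mul_div_cancel_right₀ _ (h1E x).ne'
      have hlog : Real.log (φ x) - Real.log (1 - φ x) = L * x := by
        rw [← Real.log_div (ne_of_gt hφpos) (ne_of_gt h1φpos), hratio, hE, Real.log_exp]
      have : (Real.log (φ x) : ℂ) * (-s) + (Real.log (1 - φ x) : ℂ) * s
          = -((Real.log (φ x) - Real.log (1 - φ x) : ℝ) : ℂ) * s := by push_cast; ring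
      rw [this, hlog, hs, hc]
      have hLne : (L : ℂ) ≠ 0 := by exact_mod_cast ne_of_gt hL
      push_cast
      field_simp
    rw [habs, hgval, fC, Complex.real_smul]
    simp only [hf, hE]
    push_cast
    ring
  have hFT : FourierTransform.fourier (fC L) ξ
      = ∫ x : ℝ, Complex.exp ((-2 * π * x * ξ : ℝ) * I) * fC L x := by
    rw [Real.fourier_real_eq_integral_exp_smul]
    simp [smul_eq_mul]
  have key : Complex.Gamma (1 - s) * Complex.Gamma (1 + s)
      = (L : ℂ) * FourierTransform.fourier (fC L) ξ := by
    rw [hbeta, hsub, hchg, hFT, ← MeasureTheory.integral_const_mul]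
    exact MeasureTheory.integral_congr_ae (Filter.Eventually.of_forall hpoint)
  rw [key]
  have : (L : ℂ) ≠ 0 := by exact_mod_cast ne_of_gt hL
  field_simp

open Real

lemma geom_deriv_sum {r : ℝ} (h0 : 0 ≤ r) (h1 : r < 1) :
    HasSum (fun k : ℕ => (k + 1 : ℝ) * r ^ (k + 1)) (r / (1 - r) ^ 2) := by
  have hr : ‖r‖ < 1 := by rwa [Real.norm_eq_abs, _root_.abs_of_nonneg h0]
  have hs : Summable (fun n : ℕ => (n : ℝ) * r ^ n) := by
    have := summable_pow_mul_geometric_of_norm_lt_one (R := ℝ) 1 hr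
    simpa using this
  have ht : ∑' n : ℕ, (n : ℝ) * r ^ n = r / (1 - r) ^ 2 :=
    tsum_coe_mul_geometric_of_norm_lt_one hr
  have h2 : Summable (fun k : ℕ => ((k + 1 : ℕ) : ℝ) * r ^ (k + 1)) :=
    hs.comp_injective (add_left_injective 1)
  have h3 : HasSum (fun k : ℕ => ((k + 1 : ℕ) : ℝ) * r ^ (k + 1)) (r / (1 - r) ^ 2) := by
    have := (Summable.tsum_eq_zero_add hs).symm
    simp only [Nat.cast_zero, zero_mul, pow_zero, zero_add] at this
    rw [ht] at this
    exact this ▸ h2.hasSum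
  convert h3 using 2 with k
  push_cast
  ring

lemma lambert_term_eq {q : ℝ} (hq : 1 < q) (m : ℕ) (hm : 1 ≤ m) :
    HasSum (fun k : ℕ => (k + 1 : ℝ) * (q⁻¹ ^ m) ^ (k + 1)) (q ^ m / (q ^ m - 1) ^ 2) := by
  have hq0 : (0:ℝ) < q := lt_trans one_pos hq
  have hqm : 1 < q ^ m := one_lt_pow₀ hq (by omega)
  have hx0 : (0:ℝ) ≤ q⁻¹ ^ m := by positivity
  have hx1 : q⁻¹ ^ m < 1 := by
    rw [inv_pow]
    exact inv_lt_one_of_one_lt₀ hqm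
  have h := geom_deriv_sum hx0 hx1
  convert h using 1
  rw [inv_pow]
  have h1 : q ^ m - 1 ≠ 0 := by linarith
  have h2 : q ^ m ≠ 0 := by positivity
  have h3 : 1 - (q ^ m)⁻¹ ≠ 0 := by
    have : (q ^ m)⁻¹ < 1 := inv_lt_one_of_one_lt₀ hqm
    linarith
  field_simp

lemma lambert_summable {q : ℝ} (hq : 1 < q) :
    Summable (fun k : ℕ => (k + 1 : ℝ) * q ^ (k + 1) / (q ^ (2 * (k + 1)) - 1)) := by
  have hq0 : (0:ℝ) < q := lt_trans one_pos hq
  have hx1 : q⁻¹ < 1 := inv_lt_one_of_one_lt₀ hq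
  have hx0 : (0:ℝ) < q⁻¹ := by positivity
  have hs : Summable (fun k : ℕ => (k + 1 : ℝ) * q⁻¹ ^ (k + 1) / (1 - q⁻¹ ^ 2)) := by
    apply Summable.div_const
    have hs0 : Summable (fun n : ℕ => (n : ℝ) * q⁻¹ ^ n) := by
      have := summable_pow_mul_geometric_of_norm_lt_one (R := ℝ) 1
        (by rwa [Real.norm_eq_abs, _root_.abs_of_nonneg hx0.le])
      simpa using this
    have := hs0.comp_injective (add_left_injective 1)
    refine this.congr fun k => ?_
    simp only [Function.comp_apply]
    push_cast
    ring
  apply hs.of_nonneg_of_le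
  · intro k
    have h1 : (0:ℝ) < q ^ (2 * (k + 1)) - 1 := by
      have := one_lt_pow₀ hq (n := 2 * (k+1)) (by omega)
      linarith
    positivity
  · intro k
    have hqm : 1 < q ^ (k+1) := one_lt_pow₀ hq (by omega)
    have h1 : (1:ℝ) < q ^ (2 * (k + 1)) := one_lt_pow₀ hq (by omega)
    -- (k+1) q^m/(q^{2m}-1) = (k+1) x^m/(1-x^{2m}) ≤ (k+1) x^m/(1-x^2)
    have key : (k + 1 : ℝ) * q ^ (k+1) / (q ^ (2 * (k + 1)) - 1)
        = (k + 1 : ℝ) * q⁻¹ ^ (k+1) / (1 - q⁻¹ ^ (2 * (k+1))) := by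
      have h2 : q ^ (2*(k+1)) = q ^ (k+1) * q ^ (k+1) := by
        rw [← pow_add]; congr 1; ring
      rw [inv_pow, inv_pow, h2]
      have hu0 : q ^ (k+1) ≠ 0 := by positivity
      have hd : q ^ (k+1) * q ^ (k+1) - 1 ≠ 0 := by nlinarith
      have hd2 : 1 - (q ^ (k+1) * q ^ (k+1))⁻¹ ≠ 0 := by
        have : (q ^ (k+1) * q ^ (k+1))⁻¹ < 1 := inv_lt_one_of_one_lt₀ (by nlinarith)
        linarith
      field_simp
    rw [key]
    apply div_le_div_of_nonneg_left
    · positivity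
    · have : q⁻¹ ^ (2*(k+1)) ≤ q⁻¹ ^ 2 := by
        apply pow_le_pow_of_le_one hx0.le hx1.le
        omega
      nlinarith [sq_nonneg q⁻¹, pow_pos hx0 2]
    · have : q⁻¹ ^ (2*(k+1)) ≤ q⁻¹ ^ 2 := by
        apply pow_le_pow_of_le_one hx0.le hx1.le
        omega
      have h2 : q⁻¹ ^ 2 < 1 := by nlinarith
      linarith

lemma lambert_row {q : ℝ} (hq : 1 < q) (k : ℕ) :
    HasSum (fun j : ℕ => (k + 1 : ℝ) * (q⁻¹ ^ (1 + 2 * j)) ^ (k + 1))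
      ((k + 1 : ℝ) * q ^ (k + 1) / (q ^ (2 * (k + 1)) - 1)) := by
  have hq0 : (0:ℝ) < q := lt_trans one_pos hq
  have hx0 : (0:ℝ) < q⁻¹ := by positivity
  have hx1 : q⁻¹ < 1 := inv_lt_one_of_one_lt₀ hq
  have hxk0 : (0:ℝ) < q⁻¹ ^ (k+1) := by positivity
  have hxk1 : q⁻¹ ^ (k+1) < 1 := pow_lt_one₀ hx0.le hx1 (by omega)
  have hr0 : (0:ℝ) ≤ (q⁻¹ ^ (k+1)) ^ 2 := by positivity
  have hr1 : (q⁻¹ ^ (k+1)) ^ 2 < 1 := by nlinarith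
  have hgeo : HasSum (fun j : ℕ => ((q⁻¹ ^ (k+1)) ^ 2) ^ j) (1 - (q⁻¹ ^ (k+1)) ^ 2)⁻¹ :=
    hasSum_geometric_of_lt_one hr0 hr1
  have h := hgeo.mul_left ((k + 1 : ℝ) * q⁻¹ ^ (k+1))
  have heq : ∀ j : ℕ, (k + 1 : ℝ) * (q⁻¹ ^ (1 + 2 * j)) ^ (k + 1)
      = (k + 1 : ℝ) * q⁻¹ ^ (k+1) * ((q⁻¹ ^ (k+1)) ^ 2) ^ j := by
    intro j
    have hpow : (q⁻¹ ^ (1 + 2 * j)) ^ (k + 1) = q⁻¹ ^ (k+1) * ((q⁻¹ ^ (k+1)) ^ 2) ^ j := by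
      rw [← pow_mul, ← pow_mul, ← pow_mul, ← pow_add]
      congr 1
      ring
    rw [hpow]
    ring
  have hval : (k + 1 : ℝ) * q⁻¹ ^ (k+1) * (1 - (q⁻¹ ^ (k+1)) ^ 2)⁻¹
      = (k + 1 : ℝ) * q ^ (k + 1) / (q ^ (2 * (k + 1)) - 1) := by
    have h2 : q ^ (2*(k+1)) = q ^ (k+1) * q ^ (k+1) := by rw [← pow_add]; congr 1; ring
    have hu : (1:ℝ) < q ^ (k+1) := one_lt_pow₀ hq (by omega)
    have gen : ∀ u : ℝ, 1 < u →
        (k + 1 : ℝ) * u⁻¹ * (1 - (u ^ 2)⁻¹)⁻¹ = (k + 1 : ℝ) * u / (u * u - 1) := by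
      intro u hu1
      have hu0 : u ≠ 0 := by nlinarith
      have hd : u * u - 1 ≠ 0 := by nlinarith
      have e : 1 - (u ^ 2)⁻¹ = (u * u - 1) / (u * u) := by
        field_simp
      rw [e, inv_div]
      field_simp
    rw [h2]
    simp only [inv_pow]
    exact gen _ hu
  rw [← hval]
  exact h.congr_fun heq

lemma lambert_eq {q : ℝ} (hq : 1 < q) :
    (∑' k : ℕ, (k + 1 : ℝ) * q ^ (k + 1) / (q ^ (2 * (k + 1)) - 1))
      = ∑' j : ℕ, q ^ (1 + 2 * j) / (q ^ (1 + 2 * j) - 1) ^ 2 := by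
  set G : ℕ → ℕ → ℝ := fun k j => (k + 1 : ℝ) * (q⁻¹ ^ (1 + 2 * j)) ^ (k + 1) with hG
  have hq0 : (0:ℝ) < q := lt_trans one_pos hq
  have hGnn : ∀ p : ℕ × ℕ, 0 ≤ Function.uncurry G p := by
    rintro ⟨k, j⟩
    have : (0:ℝ) < q⁻¹ := by positivity
    simp only [Function.uncurry, hG]
    positivity
  have hrows : ∀ k, Summable (G k) := fun k => (lambert_row hq k).summable
  have hrowsums : Summable (fun k => ∑' j, G k j) := by
    apply (lambert_summable hq).congr
    intro k
    exact ((lambert_row hq k).tsum_eq).symm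
  have hunc : Summable (Function.uncurry G) :=
    (summable_prod_of_nonneg hGnn).2 ⟨hrows, hrowsums⟩
  calc (∑' k : ℕ, (k + 1 : ℝ) * q ^ (k + 1) / (q ^ (2 * (k + 1)) - 1))
      = ∑' (k : ℕ) (j : ℕ), G k j := by
        refine tsum_congr fun k => ?_
        exact ((lambert_row hq k).tsum_eq).symm
    _ = ∑' (j : ℕ) (k : ℕ), G k j := (Summable.tsum_comm hunc).symm
    _ = ∑' j : ℕ, q ^ (1 + 2 * j) / (q ^ (1 + 2 * j) - 1) ^ 2 := by
        refine tsum_congr fun j => ?_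
        exact (lambert_term_eq hq (1 + 2 * j) (by omega)).tsum_eq

lemma fourierInt_zero (L : ℝ) (hL : 0 < L) :
    FourierTransform.fourier (fC L) 0 = ((1 / L : ℝ) : ℂ) := by
  rw [fourier_fC L hL 0]
  norm_num [Complex.Gamma_one]

lemma fourier_val (L : ℝ) (hL : 0 < L) (ξ : ℝ) (hξ : ξ ≠ 0) :
    FourierTransform.fourier (fC L) ξ
      = ((2 * π ^ 2 * ξ / L / Real.sinh (2 * π ^ 2 * ξ / L) / L : ℝ) : ℂ) := by
  rw [fourier_fC L hL ξ]
  have hc : (2 * π * ξ / L) ≠ 0 :=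
    div_ne_zero (mul_ne_zero (mul_ne_zero two_ne_zero Real.pi_ne_zero) hξ) (ne_of_gt hL)
  rw [gamma_refl _ hc, show π * (2 * π * ξ / L) = 2 * π ^ 2 * ξ / L by ring]
  norm_cast
theorem stmt9 (b : ℝ) (hb : 1 < b) (q : ℝ) (hq : q = Real.exp (2 * Real.pi ^ 2 / Real.log b)) :
    (∑' n : ℕ, b ^ (n + 1) / (1 + b ^ (n + 1)) ^ 2) - 1 / (2 * Real.log b)
      = -1 / 8 + (4 * Real.pi ^ 2 / Real.log b ^ 2) *
          ∑' j : ℕ, q ^ (1 + 2 * j) / (q ^ (1 + 2 * j) - 1) ^ 2 := by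
  have hb0 : (0:ℝ) < b := lt_trans one_pos hb
  set L := Real.log b with hLdef
  have hL : 0 < L := Real.log_pos hb
  have hLne : L ≠ 0 := ne_of_gt hL
  set a := 2 * π ^ 2 / L with ha
  have ha0 : 0 < a := by positivity
  have hq1 : 1 < q := by rw [hq]; exact Real.one_lt_exp_iff.2 (by positivity)
  have hq0 : (0:ℝ) < q := lt_trans one_pos hq1
  -- exp values at integers
  have hqk : ∀ m : ℕ, Real.exp (a * m) = q ^ m := by
    intro m
    rw [hq, mul_comm, Real.exp_nat_mul]
  have hbk : ∀ m : ℕ, Real.exp (L * m) = b ^ m := by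
    intro m
    rw [mul_comm, Real.exp_nat_mul, Real.exp_log hb0]
  -- summability of the left series
  have hpow1 : ∀ m : ℕ, (1:ℝ) < b ^ (m+1) := fun m => one_lt_pow₀ hb (by omega)
  have hSle : ∀ n : ℕ, b ^ (n+1) / (1 + b ^ (n+1)) ^ 2 ≤ b⁻¹ ^ (n+1) := by
    intro n
    have hu : (1:ℝ) < b ^ (n+1) := hpow1 n
    have hu0 : (0:ℝ) < b ^ (n+1) := by positivity
    rw [inv_pow, div_le_iff₀ (by positivity)]
    have key : b ^ (n+1) * (b ^ (n+1))⁻¹ = 1 := mul_inv_cancel₀ (ne_of_gt hu0)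
    nlinarith [inv_pos.2 hu0, hu0]
  have hgeo : Summable (fun n : ℕ => b⁻¹ ^ (n+1)) := by
    have h1 : b⁻¹ < 1 := inv_lt_one_of_one_lt₀ hb
    have h0 : (0:ℝ) ≤ b⁻¹ := by positivity
    exact ((summable_geometric_of_lt_one h0 h1).mul_left b⁻¹).congr fun n => by
      rw [← pow_succ']
  have hSsum : Summable (fun n : ℕ => b ^ (n+1) / (1 + b ^ (n+1)) ^ 2) := by
    refine Summable.of_nonneg_of_le (fun n => by positivity) hSle hgeo
  have hSsum0 : Summable (fun n : ℕ => b ^ n / (1 + b ^ n) ^ 2) :=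
    (summable_nat_add_iff 1).1 (by exact_mod_cast hSsum)
  -- the w function : values of the Fourier transform at integers
  set w : ℤ → ℝ := fun n => if n = 0 then 1 / L
    else (a * n / Real.sinh (a * n)) / L with hw
  have hweval : ∀ n : ℤ, FourierTransform.fourier (fC L) n = ((w n : ℝ) : ℂ) := by
    intro n
    by_cases h : n = 0
    · subst h
      simp only [hw, if_pos rfl, Int.cast_zero]
      exact fourierInt_zero L hL
    · have hn : ((n:ℝ)) ≠ 0 := Int.cast_ne_zero.2 h
      rw [fourier_val L hL n hn, hw]
      simp only [if_neg h]
      rw [show 2 * π ^ 2 * (n:ℝ) / L = a * n by rw [ha]; ring]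
  have hwneg : ∀ n : ℤ, w (-n) = w n := by
    intro n
    by_cases h : n = 0
    · subst h; simp
    · rw [hw]
      simp only [neg_eq_zero, if_neg h]
      push_cast
      rw [show a * -(n:ℝ) = -(a * n) by ring, Real.sinh_neg, neg_div_neg_eq]
  have hwposval : ∀ k : ℕ, w ((k:ℤ)+1)
      = (2 * a / L) * ((k + 1 : ℝ) * q ^ (k + 1) / (q ^ (2 * (k + 1)) - 1)) := by
    intro k
    have hk : ((k:ℤ)+1) ≠ 0 := by omega
    rw [hw]
    simp only [if_neg hk]
    have hcast : (((k:ℤ)+1 : ℤ) : ℝ) = ((k+1 : ℕ) : ℝ) := by push_cast; ring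
    rw [hcast]
    have hsinh : Real.sinh (a * ((k+1:ℕ):ℝ)) = (q ^ (k+1) - (q ^ (k+1))⁻¹) / 2 := by
      rw [Real.sinh_eq, hqk (k+1), Real.exp_neg, hqk (k+1)]
    rw [hsinh]
    have hu : (1:ℝ) < q ^ (k+1) := one_lt_pow₀ hq1 (by omega)
    have hu0 : q ^ (k+1) ≠ 0 := by positivity
    have h2m : q ^ (2*(k+1)) = q ^ (k+1) * q ^ (k+1) := by rw [← pow_add]; congr 1; ring
    have hd1 : q ^ (k+1) - (q ^ (k+1))⁻¹ ≠ 0 := by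
      have : (q ^ (k+1))⁻¹ < 1 := inv_lt_one_of_one_lt₀ hu
      intro hcon
      nlinarith
    have hd2 : q ^ (k+1) * q ^ (k+1) - 1 ≠ 0 := by nlinarith
    rw [h2m]
    push_cast
    field_simp
  have hwsum_pos : Summable (fun k : ℕ => w ((k:ℤ)+1)) := by
    refine ((lambert_summable hq1).mul_left (2 * a / L)).congr fun k => (hwposval k).symm
  have hwsum_nat : Summable (fun n : ℕ => w n) := by
    refine (summable_nat_add_iff 1).1 (hwsum_pos.congr fun k => ?_)
    norm_cast
  have hwsum_neg : Summable (fun n : ℕ => w (-((n:ℤ)+1))) := by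
    refine hwsum_pos.congr fun k => ?_
    rw [hwneg]
  have hFsum : Summable (fun n : ℤ => FourierTransform.fourier (fC L) n) := by
    have h1 : Summable (fun n : ℤ => ((w n : ℝ) : ℂ)) := by
      rw [Complex.summable_ofReal]
      exact Summable.of_nat_of_neg_add_one hwsum_nat hwsum_neg
    exact h1.congr fun n => (hweval n).symm
  -- Poisson summation
  have hfO : fC L =O[Filter.cocompact ℝ] (fun x : ℝ => |x| ^ (-(2:ℝ))) := by
    have := fC_isBigO L hL
    simpa using this
  have hpois := Real.tsum_eq_tsum_fourier_of_rpow_decay_of_summable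
    (fC_cont L) one_lt_two hfO hFsum 0
  -- evaluate the right side of Poisson
  have hRHS : (∑' n : ℤ, FourierTransform.fourier (fC L) n * fourier n ((0:ℝ) : UnitAddCircle))
      = ((w 0 + ((∑' k : ℕ, w ((k:ℤ)+1)) + ∑' k : ℕ, w ((k:ℤ)+1)) : ℝ) : ℂ) := by
    have hterm : ∀ n : ℤ, FourierTransform.fourier (fC L) n * fourier n ((0:ℝ) : UnitAddCircle)
        = ((w n : ℝ) : ℂ) := by
      intro n
      rw [hweval n]
      have : ((0:ℝ) : UnitAddCircle) = 0 := QuotientAddGroup.mk_zero _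
      rw [this, fourier_eval_zero, mul_one]
    rw [tsum_congr hterm]
    have hs1 : Summable (fun n : ℕ => ((w n : ℝ) : ℂ)) := (Complex.summable_ofReal).2 hwsum_nat
    have hs2 : Summable (fun n : ℕ => ((w (-((n:ℤ)+1)) : ℝ) : ℂ)) :=
      (Complex.summable_ofReal).2 hwsum_neg
    rw [tsum_of_nat_of_neg_add_one (f := fun n : ℤ => ((w n : ℝ) : ℂ)) hs1 hs2,
      Summable.tsum_eq_zero_add hs1]
    push_cast [← Complex.ofReal_tsum]
    have e1 : (∑' k : ℕ, (w ((k:ℕ)+1) : ℝ)) = ∑' k : ℕ, w ((k:ℤ)+1) := by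
      refine tsum_congr fun k => ?_
      norm_cast
    have e2 : (∑' k : ℕ, w (-((k:ℤ)+1))) = ∑' k : ℕ, w ((k:ℤ)+1) := by
      refine tsum_congr fun k => ?_
      rw [hwneg]
    rw [e1, e2]
    push_cast
    ring
  -- evaluate the left side of Poisson
  have hLHS : (∑' n : ℤ, fC L ((0:ℝ) + n))
      = (((1/4 : ℝ) + ((∑' n : ℕ, b ^ (n+1) / (1 + b ^ (n+1)) ^ 2)
          + ∑' n : ℕ, b ^ (n+1) / (1 + b ^ (n+1)) ^ 2) : ℝ) : ℂ) := by
    have hnat : ∀ n : ℕ, fC L ((0:ℝ) + ((n:ℤ):ℝ)) = ((b ^ n / (1 + b ^ n) ^ 2 : ℝ) : ℂ) := by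
      intro n
      rw [fC]
      congr 2 <;> rw [show ((0:ℝ) + ((n:ℤ):ℝ)) = ((n:ℕ):ℝ) by push_cast; ring, hbk n]
    have hneg : ∀ n : ℕ, fC L ((0:ℝ) + ((-((n:ℤ)+1) : ℤ):ℝ))
        = ((b ^ (n+1) / (1 + b ^ (n+1)) ^ 2 : ℝ) : ℂ) := by
      intro n
      rw [fC]
      have harg : L * ((0:ℝ) + ((-((n:ℤ)+1) : ℤ):ℝ)) = -(L * ((n+1 : ℕ):ℝ)) := by
        push_cast; ring
      rw [harg, Real.exp_neg, hbk (n+1)]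
      have hu : (0:ℝ) < b ^ (n+1) := by positivity
      have h1u : (1:ℝ) + b ^ (n+1) ≠ 0 := by positivity
      have h1ui : (1:ℝ) + (b ^ (n+1))⁻¹ ≠ 0 := by positivity
      congr 1
      field_simp
      ring
    have hs1 : Summable (fun n : ℕ => fC L ((0:ℝ) + ((n:ℤ):ℝ))) := by
      refine ((Complex.summable_ofReal).2 hSsum0).congr fun n => (hnat n).symm
    have hs2 : Summable (fun n : ℕ => fC L ((0:ℝ) + ((-((n:ℤ)+1) : ℤ):ℝ))) := by
      refine ((Complex.summable_ofReal).2 hSsum).congr fun n => (hneg n).symm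
    rw [tsum_of_nat_of_neg_add_one hs1 hs2]
    rw [Summable.tsum_eq_zero_add hs1]
    have h0 : fC L ((0:ℝ) + (((0:ℕ):ℤ):ℝ)) = ((1/4 : ℝ) : ℂ) := by
      rw [hnat 0]
      norm_num
    rw [h0]
    have e1 : (∑' k : ℕ, fC L ((0:ℝ) + (((k+1:ℕ):ℤ):ℝ)))
        = ((∑' n : ℕ, b ^ (n+1) / (1 + b ^ (n+1)) ^ 2 : ℝ) : ℂ) := by
      rw [Complex.ofReal_tsum]
      exact tsum_congr fun k => hnat (k+1)
    have e2 : (∑' k : ℕ, fC L ((0:ℝ) + ((-((k:ℤ)+1) : ℤ):ℝ)))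
        = ((∑' n : ℕ, b ^ (n+1) / (1 + b ^ (n+1)) ^ 2 : ℝ) : ℂ) := by
      rw [Complex.ofReal_tsum]
      exact tsum_congr fun k => hneg k
    rw [e1, e2]
    push_cast
    ring
  rw [hLHS, hRHS] at hpois
  have hreal : (1/4 : ℝ) + ((∑' n : ℕ, b ^ (n+1) / (1 + b ^ (n+1)) ^ 2)
      + ∑' n : ℕ, b ^ (n+1) / (1 + b ^ (n+1)) ^ 2)
      = w 0 + ((∑' k : ℕ, w ((k:ℤ)+1)) + ∑' k : ℕ, w ((k:ℤ)+1)) := by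
    exact_mod_cast hpois
  have hw0 : w 0 = 1 / L := by rw [hw]; simp
  have hwt : (∑' k : ℕ, w ((k:ℤ)+1))
      = (2 * a / L) * ∑' j : ℕ, q ^ (1 + 2*j) / (q ^ (1 + 2*j) - 1) ^ 2 := by
    rw [tsum_congr hwposval, tsum_mul_left, lambert_eq hq1]
  rw [hw0, hwt] at hreal
  have hcoef : 2 * a / L = 4 * π ^ 2 / L ^ 2 := by
    rw [ha]
    field_simp
    ring
  rw [hcoef] at hreal
  have hgoal : (∑' n : ℕ, b ^ (n+1) / (1 + b ^ (n+1)) ^ 2) - 1 / (2 * L)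
      = -1/8 + (4 * π ^ 2 / L ^ 2) * ∑' j : ℕ, q ^ (1 + 2*j) / (q ^ (1 + 2*j) - 1) ^ 2 := by
    have h2L : 1 / L = 2 * (1 / (2 * L)) := by field_simp
    linarith [hreal]
  exact hgoal
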